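/- Fix an integer n > 2 and let 𝒰 ⊆ [0,1]^n be the set of u for which the equation v = f(u,v) has a unique solution v(u) on [v₀(u), +∞). Then for all u, u' ∈ 𝒰: |v(u) − v(u')| ≤ (8/n) · Σ_{i=1}^n |u_i − u'_i|. -/

import Mathlib

open Finset
open scoped Classical

/-- `δ_i(u,v) = v + (4(n−1)/n²)(1 − 2u_i)`. -/
noncomputable def deltaFP (n : ℕ) (u : Fin n → ℝ) (v : ℝ) (i : Fin n) : ℝ :=
  v + 4 * ((n : ℝ) - 1) / (n : ℝ) ^ 2 * (1 - 2 * u i)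

/-- `v₀(u) = max( (4(n−1)/n²)·max_i(2u_i − 1), 0 )`. -/
noncomputable def v0FP (n : ℕ) (u : Fin n → ℝ) : ℝ :=
  max (4 * ((n : ℝ) - 1) / (n : ℝ) ^ 2 * (⨆ i, (2 * u i - 1))) 0

/-- `f(u,v) = ( (1/(n−2)) Σ_i √(δ_i(u,v)) )²`. -/
noncomputable def fFP (n : ℕ) (u : Fin n → ℝ) (v : ℝ) : ℝ :=
  ((1 / ((n : ℝ) - 2)) * ∑ i, Real.sqrt (deltaFP n u v i)) ^ 2

/-- `g_i(u,v) = 1/2 + (n/4)(√(δ_i(u,v)) − √v)`. -/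
noncomputable def gFP (n : ℕ) (u : Fin n → ℝ) (v : ℝ) (i : Fin n) : ℝ :=
  1 / 2 + (n : ℝ) / 4 * (Real.sqrt (deltaFP n u v i) - Real.sqrt v)

/-- `v₁(u) = (2/n) Σ_i (2u_i − 1)`. -/
noncomputable def v1FP (n : ℕ) (u : Fin n → ℝ) : ℝ :=
  (2 / (n : ℝ)) * ∑ i, (2 * u i - 1)

lemma aux_c_nonneg (n : ℕ) (hn : 2 < n) : (0:ℝ) ≤ 4 * ((n : ℝ) - 1) / (n : ℝ) ^ 2 := by
  have h : (2:ℝ) < n := by exact_mod_cast hn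
  apply div_nonneg (by nlinarith) (by positivity)

lemma aux_delta_nonneg (n : ℕ) (hn : 2 < n) (u : Fin n → ℝ) (v : ℝ)
    (hv : v0FP n u ≤ v) (i : Fin n) : 0 ≤ deltaFP n u v i := by
  have hc := aux_c_nonneg n hn
  have h1 : (2 * u i - 1) ≤ ⨆ j, (2 * u j - 1) :=
    le_ciSup (f := fun j => 2 * u j - 1) (Set.Finite.bddAbove (Set.finite_range _)) i
  have h2 : 4 * ((n : ℝ) - 1) / (n : ℝ) ^ 2 * (2 * u i - 1) ≤ v0FP n u :=
    le_trans (mul_le_mul_of_nonneg_left h1 hc) (le_max_left _ _)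
  have := le_trans h2 hv
  unfold deltaFP
  nlinarith

lemma aux_v0_nonneg (n : ℕ) (u : Fin n → ℝ) : 0 ≤ v0FP n u := le_max_right _ _

lemma aux_sum_eq (n : ℕ) (hn : 2 < n) (u : Fin n → ℝ) (v : ℝ) (hv0 : 0 ≤ v)
    (hfix : fFP n u v = v) :
    ∑ i, Real.sqrt (deltaFP n u v i) = ((n:ℝ) - 2) * Real.sqrt v := by
  have hn2 : (2:ℝ) < n := by exact_mod_cast hn
  have hpos : (0:ℝ) < (n:ℝ) - 2 := by linarith
  have hT : 0 ≤ ∑ i, Real.sqrt (deltaFP n u v i) :=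
    Finset.sum_nonneg fun i _ => Real.sqrt_nonneg _
  have h1 : Real.sqrt (fFP n u v) = (1 / ((n : ℝ) - 2)) * ∑ i, Real.sqrt (deltaFP n u v i) := by
    unfold fFP
    rw [Real.sqrt_sq (by positivity)]
  rw [hfix] at h1
  field_simp at h1
  linarith

/-- For `W > 1` the sum of square roots strictly dominates `(n-2)√W`. -/
lemma aux_big (n : ℕ) (hn : 2 < n) (u' : Fin n → ℝ) (hu' : ∀ i, u' i ∈ Set.Icc (0 : ℝ) 1)
    (W : ℝ) (hW : 1 < W) :
    ((n:ℝ) - 2) * Real.sqrt W < ∑ i, Real.sqrt (deltaFP n u' W i) := by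
  have hn2 : (2:ℝ) < n := by exact_mod_cast hn
  set c : ℝ := 4 * ((n : ℝ) - 1) / (n : ℝ) ^ 2 with hc
  have hcle : c ≤ 1 := by
    rw [hc, div_le_one (by positivity)]
    nlinarith
  have hWc : 0 ≤ W - c := by linarith
  have h1 : ∀ i : Fin n, Real.sqrt (W - c) ≤ Real.sqrt (deltaFP n u' W i) := by
    intro i
    apply Real.sqrt_le_sqrt
    have := (hu' i).2
    unfold deltaFP
    rw [← hc]
    have hc0 : (0:ℝ) ≤ c := by
      rw [hc]; apply div_nonneg (by nlinarith) (by positivity)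
    nlinarith [mul_le_mul_of_nonneg_left (by linarith : 1 - 2 * u' i ≥ -1) hc0]
  have h2 : (n:ℝ) * Real.sqrt (W - c) ≤ ∑ i, Real.sqrt (deltaFP n u' W i) := by
    calc (n:ℝ) * Real.sqrt (W - c) = ∑ _i : Fin n, Real.sqrt (W - c) := by
          rw [Finset.sum_const, card_univ, Fintype.card_fin, nsmul_eq_mul]
      _ ≤ _ := Finset.sum_le_sum fun i _ => h1 i
  have h3 : ((n:ℝ) - 2) * Real.sqrt W < (n:ℝ) * Real.sqrt (W - c) := by
    have e1 : ((n:ℝ) - 2) * Real.sqrt W = Real.sqrt (((n:ℝ) - 2) ^ 2 * W) := by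
      rw [Real.sqrt_mul (by positivity), Real.sqrt_sq (by linarith)]
    have e2 : (n:ℝ) * Real.sqrt (W - c) = Real.sqrt ((n:ℝ) ^ 2 * (W - c)) := by
      rw [Real.sqrt_mul (by positivity), Real.sqrt_sq (by linarith)]
    rw [e1, e2]
    apply Real.sqrt_lt_sqrt (by positivity)
    have : (n:ℝ)^2 * c = 4 * ((n:ℝ) - 1) := by
      rw [hc]; field_simp
    nlinarith
  linarith

/-- Above the unique fixed point, the sum of square roots strictly dominates. -/
lemma aux_Gpos (n : ℕ) (hn : 2 < n) (u' : Fin n → ℝ) (hu' : ∀ i, u' i ∈ Set.Icc (0 : ℝ) 1)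
    (huniq' : ∃! v, v ∈ Set.Ici (v0FP n u') ∧ fFP n u' v = v)
    (v' : ℝ) (hv' : v' ∈ Set.Ici (v0FP n u') ∧ fFP n u' v' = v')
    (w : ℝ) (hw : v' < w) :
    ((n:ℝ) - 2) * Real.sqrt w < ∑ i, Real.sqrt (deltaFP n u' w i) := by
  have hn2 : (2:ℝ) < n := by exact_mod_cast hn
  by_contra hle
  push_neg at hle
  rcases lt_or_ge 1 w with hw1 | hw1
  · exact absurd hle (not_le.mpr (aux_big n hn u' hu' w hw1))
  -- w ≤ 1 : use the intermediate value theorem on [w, 2]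
  have hG : Continuous fun ω : ℝ => (∑ i, Real.sqrt (deltaFP n u' ω i)) - ((n:ℝ) - 2) * Real.sqrt ω := by
    apply Continuous.sub
    · apply continuous_finset_sum
      intro i _
      exact Real.continuous_sqrt.comp (by unfold deltaFP; continuity)
    · exact continuous_const.mul Real.continuous_sqrt
  set G : ℝ → ℝ := fun ω => (∑ i, Real.sqrt (deltaFP n u' ω i)) - ((n:ℝ) - 2) * Real.sqrt ω with hGdef
  have hGw : G w ≤ 0 := by simp only [hGdef]; linarith
  have hG2 : 0 < G 2 := by
    have := aux_big n hn u' hu' 2 (by norm_num)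
    simp only [hGdef]; linarith
  have hsub : Set.Icc (G w) (G 2) ⊆ G '' Set.Icc w 2 :=
    intermediate_value_Icc (by linarith) hG.continuousOn
  obtain ⟨z, hzmem, hGz⟩ := hsub ⟨hGw, hG2.le⟩
  have hzw : w ≤ z := hzmem.1
  have hz0 : 0 ≤ z := by
    have := hv'.1
    have h0 := aux_v0_nonneg n u'
    simp only [Set.mem_Ici] at this
    linarith
  have hzsum : ∑ i, Real.sqrt (deltaFP n u' z i) = ((n:ℝ) - 2) * Real.sqrt z := by
    simp only [hGdef] at hGz
    linarith
  have hzfix : fFP n u' z = z := by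
    unfold fFP
    rw [hzsum]
    have he : (1 / ((n : ℝ) - 2)) * (((n:ℝ) - 2) * Real.sqrt z) = Real.sqrt z := by
      have : ((n:ℝ) - 2) ≠ 0 := by linarith
      field_simp
    rw [he, Real.sq_sqrt hz0]
  have hzIci : z ∈ Set.Ici (v0FP n u') := by
    have := hv'.1
    simp only [Set.mem_Ici] at this ⊢
    linarith
  obtain ⟨y, _, hy⟩ := huniq'
  have e1 := hy z ⟨hzIci, hzfix⟩
  have e2 := hy v' hv'
  have : z = v' := by rw [e1, e2]
  linarith

lemma aux_chord (nd H t : ℝ) (h1 : 0 ≤ t) (h2 : t ≤ 1) (h3 : H ≤ nd) (h4 : 0 ≤ H) :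
    nd * (1 - t) ^ 2 ≤ nd - t * H := by
  nlinarith [mul_nonneg h1 (mul_nonneg (le_trans h4 h3) (sub_nonneg.mpr h2)),
    mul_nonneg h1 (sub_nonneg.mpr h3)]

lemma aux_amgm_sqrt (x y θ : ℝ) (hx : 0 ≤ x) (hθ : 0 < θ) (hxy : x ≤ y) :
    Real.sqrt x ≤ (y / θ + θ) / 2 := by
  have h1 := sq_nonneg (Real.sqrt x - θ)
  have h2 : Real.sqrt x ^ 2 = x := Real.sq_sqrt hx
  have h3 : y / θ + θ = (y + θ ^ 2) / θ := by field_simp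
  rw [h3, div_div, le_div_iff₀ (by positivity)]
  nlinarith

set_option maxHeartbeats 1000000 in
lemma aux_one_sided (n : ℕ) (hn : 2 < n)
    (u u' : Fin n → ℝ) (hu : ∀ i, u i ∈ Set.Icc (0 : ℝ) 1)
    (hu' : ∀ i, u' i ∈ Set.Icc (0 : ℝ) 1)
    (huniq' : ∃! v, v ∈ Set.Ici (v0FP n u') ∧ fFP n u' v = v)
    (v v' : ℝ)
    (hv : v ∈ Set.Ici (v0FP n u) ∧ fFP n u v = v)
    (hv' : v' ∈ Set.Ici (v0FP n u') ∧ fFP n u' v' = v') :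
    v - v' ≤ (8 / (n : ℝ)) * ∑ i, |u i - u' i| := by
  have hn2 : (2:ℝ) < n := by exact_mod_cast hn
  have hn0 : (0:ℝ) < n := by linarith
  set E : ℝ := ∑ i, |u i - u' i| with hE
  clear_value E
  have hE0 : 0 ≤ E := by rw [hE]; exact Finset.sum_nonneg fun i _ => abs_nonneg _
  by_contra hcon
  push_neg at hcon
  rcases eq_or_lt_of_le hE0 with hEz | hEpos
  · -- E = 0 : then u = u' and uniqueness forces v = v'
    have huu : u = u' := by
      funext i
      have h1 : |u i - u' i| ≤ E := by
        rw [hE]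
        exact Finset.single_le_sum (f := fun j => |u j - u' j|) (fun j _ => abs_nonneg _) (mem_univ i)
      have h2 : |u i - u' i| = 0 := le_antisymm (by linarith) (abs_nonneg _)
      have h3 := abs_eq_zero.mp h2
      linarith
    obtain ⟨y, _, hy⟩ := huniq'
    have e1 : v = y := hy v (huu ▸ hv)
    have e2 : v' = y := hy v' hv'
    have e3 : v = v' := by rw [e1, e2]
    rw [← hEz, e3] at hcon
    simp at hcon
  · -- main case
    set c : ℝ := 4 * ((n : ℝ) - 1) / (n : ℝ) ^ 2 with hc
    clear_value c
    have hc0 : 0 ≤ c := by rw [hc]; exact aux_c_nonneg n hn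
    set d : ℝ := 8 * E / (n:ℝ) ^ 2 with hd
    clear_value d
    have hd0 : 0 < d := by rw [hd]; exact div_pos (by linarith) (pow_pos hn0 2)
    set w : ℝ := v - (n:ℝ) * d with hwdef
    clear_value w
    have hnd8 : (n:ℝ) * d = 8 / (n:ℝ) * E := by rw [hd]; field_simp
    have hwv' : v' < w := by rw [hwdef, hnd8]; linarith
    have hv'0 : 0 ≤ v' := le_trans (aux_v0_nonneg n u') hv'.1
    have hw0 : 0 < w := lt_of_le_of_lt hv'0 hwv'
    have hv0 : 0 < v := by nlinarith [mul_pos hn0 hd0]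
    have hδ : ∀ i, 0 ≤ deltaFP n u v i := aux_delta_nonneg n hn u v hv.1
    have hwv0 : v0FP n u' ≤ w := le_trans hv'.1 hwv'.le
    have hx0 : ∀ i, 0 ≤ deltaFP n u' w i := aux_delta_nonneg n hn u' w hwv0
    have hsum0 : ∑ i, Real.sqrt (deltaFP n u v i) = ((n:ℝ) - 2) * Real.sqrt v :=
      aux_sum_eq n hn u v hv0.le hv.2
    set rv : ℝ := Real.sqrt v with hrv
    set rW : ℝ := Real.sqrt w with hrW
    have hrvpos : 0 < rv := by rw [hrv]; exact Real.sqrt_pos.mpr hv0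
    have hrWpos : 0 < rW := by rw [hrW]; exact Real.sqrt_pos.mpr hw0
    have hrv2 : rv ^ 2 = v := by rw [hrv]; exact Real.sq_sqrt hv0.le
    have hrW2 : rW ^ 2 = w := by rw [hrW]; exact Real.sq_sqrt hw0.le
    clear_value rv rW
    set s : Fin n → ℝ := fun i => Real.sqrt (deltaFP n u v i) with hs
    set η : Fin n → ℝ := fun i => 2 * c * |u i - u' i| with hη
    set ε : Fin n → ℝ := fun i => (n:ℝ) * d - η i with hεdef
    have hsum : ∑ i, s i = ((n:ℝ) - 2) * rv := by simp only [hs]; exact hsum0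
    have hηsum : ∑ i, η i = ((n:ℝ) - 1) * d := by
      have h1 : ∑ i, η i = 2 * c * E := by
        simp only [hη]; rw [hE, Finset.mul_sum]
      rw [h1, hc, hd]; field_simp; ring
    have hη0 : ∀ i, 0 ≤ η i := fun i => mul_nonneg (by linarith) (abs_nonneg _)
    have hηH : ∀ i, η i ≤ ((n:ℝ) - 1) * d := by
      intro i
      have h1 : |u i - u' i| ≤ E := by
        rw [hE]
        exact Finset.single_le_sum (fun j _ => abs_nonneg (u j - u' j)) (mem_univ i)
      have h2 : η i ≤ 2 * c * E := mul_le_mul_of_nonneg_left h1 (by linarith)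
      have h3 : 2 * c * E = ((n:ℝ) - 1) * d := by rw [hc, hd]; field_simp; ring
      linarith
    have hεd : ∀ i, d ≤ ε i := by
      intro i
      have h1 := hηH i
      simp only [hεdef]
      linarith
    have hkey : ∀ i, deltaFP n u' w i ≤ deltaFP n u v i - ε i := by
      intro i
      have h1 : 2 * c * (u i - u' i) ≤ η i := by
        simp only [hη]
        exact mul_le_mul_of_nonneg_left (le_abs_self _) (by linarith)
      simp only [hεdef, deltaFP, ← hc]
      rw [hwdef]
      linarith
    have hδpos : ∀ i, 0 < deltaFP n u v i := by
      intro i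
      have h1 := hkey i
      have h2 := hx0 i
      have h3 := hεd i
      linarith
    have hspos : ∀ i, 0 < s i := fun i => Real.sqrt_pos.mpr (hδpos i)
    have hs2 : ∀ i, s i ^ 2 = deltaFP n u v i := fun i => Real.sq_sqrt (hδ i)
    have hH0 : (0:ℝ) < ((n:ℝ) - 1) * d := mul_pos (by linarith) hd0
    -- chord lower bound on √ε i
    have hsqrtε : ∀ i, Real.sqrt ((n:ℝ) * d) * (1 - η i / (((n:ℝ) - 1) * d)) ≤ Real.sqrt (ε i) := by
      intro i
      have ht1 : η i / (((n:ℝ) - 1) * d) ≤ 1 := (div_le_one hH0).mpr (hηH i)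
      have ht0 : 0 ≤ η i / (((n:ℝ) - 1) * d) := div_nonneg (hη0 i) hH0.le
      have hb : (n:ℝ) * d * (1 - η i / (((n:ℝ) - 1) * d)) ^ 2 ≤ ε i := by
        have h3 : (η i / (((n:ℝ) - 1) * d)) * (((n:ℝ) - 1) * d) = η i :=
          div_mul_cancel₀ _ hH0.ne'
        have h4 := aux_chord ((n:ℝ) * d) (((n:ℝ) - 1) * d) (η i / (((n:ℝ) - 1) * d))
          ht0 ht1 (by linarith [hd0.le]) hH0.le
        rw [h3] at h4
        simp only [hεdef]
        linarith
      calc Real.sqrt ((n:ℝ) * d) * (1 - η i / (((n:ℝ) - 1) * d))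
          = Real.sqrt ((n:ℝ) * d * (1 - η i / (((n:ℝ) - 1) * d)) ^ 2) := by
            rw [Real.sqrt_mul (mul_nonneg hn0.le hd0.le), Real.sqrt_sq (by linarith)]
        _ ≤ Real.sqrt (ε i) := Real.sqrt_le_sqrt hb
    have hsqrtε_sum : ((n:ℝ) - 1) * Real.sqrt ((n:ℝ) * d) ≤ ∑ i, Real.sqrt (ε i) := by
      have h1 := Finset.sum_le_sum fun i (_ : i ∈ univ) => hsqrtε i
      have h2 : ∑ i : Fin n, Real.sqrt ((n:ℝ) * d) * (1 - η i / (((n:ℝ) - 1) * d))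
          = ((n:ℝ) - 1) * Real.sqrt ((n:ℝ) * d) := by
        rw [← Finset.mul_sum]
        have h3 : ∑ i : Fin n, (1 - η i / (((n:ℝ) - 1) * d)) = (n:ℝ) - 1 := by
          rw [Finset.sum_sub_distrib, ← Finset.sum_div, hηsum, div_self hH0.ne']
          simp
        rw [h3]; ring
      rw [h2] at h1
      exact h1
    -- Cauchy–Schwarz
    set A : ℝ := ∑ i, ε i / s i with hA
    clear_value A
    have hCS : (∑ i, Real.sqrt (ε i)) ^ 2 ≤ A * (((n:ℝ) - 2) * rv) := by
      have h := Finset.sum_mul_sq_le_sq_mul_sq univ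
        (fun i => Real.sqrt (ε i) / Real.sqrt (s i)) (fun i => Real.sqrt (s i))
      have e1 : ∀ i : Fin n, Real.sqrt (ε i) / Real.sqrt (s i) * Real.sqrt (s i)
          = Real.sqrt (ε i) := fun i =>
        div_mul_cancel₀ _ (Real.sqrt_ne_zero'.mpr (hspos i))
      have e2 : ∀ i : Fin n, (Real.sqrt (ε i) / Real.sqrt (s i)) ^ 2 = ε i / s i := fun i => by
        rw [div_pow, Real.sq_sqrt (le_of_lt (lt_of_lt_of_le hd0 (hεd i))),
          Real.sq_sqrt (hspos i).le]
      have e3 : ∀ i : Fin n, (Real.sqrt (s i)) ^ 2 = s i := fun i => Real.sq_sqrt (hspos i).le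
      calc (∑ i, Real.sqrt (ε i)) ^ 2
          = (∑ i, Real.sqrt (ε i) / Real.sqrt (s i) * Real.sqrt (s i)) ^ 2 := by
            rw [Finset.sum_congr rfl fun i _ => (e1 i).symm]
        _ ≤ (∑ i, (Real.sqrt (ε i) / Real.sqrt (s i)) ^ 2) * ∑ i, (Real.sqrt (s i)) ^ 2 := h
        _ = A * (((n:ℝ) - 2) * rv) := by
            rw [Finset.sum_congr rfl fun i _ => e2 i, Finset.sum_congr rfl fun i _ => e3 i,
              hsum, hA]
    have hAbound : (n:ℝ) * ((n:ℝ) - 2) * d / rv ≤ A := by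
      have h1 : (((n:ℝ) - 1) * Real.sqrt ((n:ℝ) * d)) ^ 2 = ((n:ℝ) - 1) ^ 2 * ((n:ℝ) * d) := by
        rw [mul_pow, Real.sq_sqrt (mul_nonneg hn0.le hd0.le)]
      have h2 : ((n:ℝ) - 2) ^ 2 * ((n:ℝ) * d) ≤ (∑ i, Real.sqrt (ε i)) ^ 2 := by
        calc ((n:ℝ) - 2) ^ 2 * ((n:ℝ) * d) ≤ ((n:ℝ) - 1) ^ 2 * ((n:ℝ) * d) := by
              nlinarith [mul_pos hn0 hd0]
          _ = (((n:ℝ) - 1) * Real.sqrt ((n:ℝ) * d)) ^ 2 := h1.symm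
          _ ≤ _ := by
              apply pow_le_pow_left₀ (mul_nonneg (by linarith) (Real.sqrt_nonneg _)) hsqrtε_sum
      have h3 := le_trans h2 hCS
      rw [div_le_iff₀ hrvpos]
      have h4 : ((n:ℝ) - 2) * ((n:ℝ) * ((n:ℝ) - 2) * d) ≤ ((n:ℝ) - 2) * (A * rv) := by
        linarith [h3]
      have h5 := le_of_mul_le_mul_left h4 (by linarith : (0:ℝ) < (n:ℝ) - 2)
      linarith
    -- per-coordinate AM–GM bound and summation
    have hper : ∀ i : Fin n, Real.sqrt (deltaFP n u' w i)
        ≤ ((deltaFP n u v i - ε i) / (s i * rW / rv) + s i * rW / rv) / 2 := by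
      intro i
      exact aux_amgm_sqrt _ _ _ (hx0 i)
        (div_pos (mul_pos (hspos i) hrWpos) hrvpos) (hkey i)
    have hθsum : ∑ i, s i * rW / rv = ((n:ℝ) - 2) * rW := by
      rw [← Finset.sum_div, ← Finset.sum_mul, hsum]
      field_simp [hrvpos.ne']
    have hterm : ∀ i : Fin n, (deltaFP n u v i - ε i) / (s i * rW / rv)
        = rv / rW * (s i - ε i / s i) := by
      intro i
      rw [← hs2 i]
      field_simp [(hspos i).ne', hrWpos.ne', hrvpos.ne']
    have hT1 : ∑ i, (deltaFP n u v i - ε i) / (s i * rW / rv)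
        = rv / rW * (((n:ℝ) - 2) * rv - A) := by
      rw [Finset.sum_congr rfl fun i _ => hterm i, ← Finset.mul_sum, Finset.sum_sub_distrib,
        hsum, hA]
    have hwrel : rv ^ 2 - (n:ℝ) * d = rW ^ 2 := by rw [hrv2, hrW2, hwdef]
    have hT1b : rv / rW * (((n:ℝ) - 2) * rv - A) ≤ ((n:ℝ) - 2) * rW := by
      have h1 : ((n:ℝ) - 2) * rv - A ≤ ((n:ℝ) - 2) * rv - (n:ℝ) * ((n:ℝ) - 2) * d / rv := by
        linarith [hAbound]
      have h2 : rv / rW * (((n:ℝ) - 2) * rv - (n:ℝ) * ((n:ℝ) - 2) * d / rv)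
          = ((n:ℝ) - 2) * rW := by
        field_simp
        linear_combination ((n:ℝ) - 2) * hwrel
      calc rv / rW * (((n:ℝ) - 2) * rv - A)
          ≤ rv / rW * (((n:ℝ) - 2) * rv - (n:ℝ) * ((n:ℝ) - 2) * d / rv) :=
            mul_le_mul_of_nonneg_left h1 (le_of_lt (div_pos hrvpos hrWpos))
        _ = ((n:ℝ) - 2) * rW := h2
    have hsum_le : ∑ i, Real.sqrt (deltaFP n u' w i) ≤ ((n:ℝ) - 2) * rW := by
      calc ∑ i, Real.sqrt (deltaFP n u' w i)
          ≤ ∑ i, ((deltaFP n u v i - ε i) / (s i * rW / rv) + s i * rW / rv) / 2 :=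
            Finset.sum_le_sum fun i _ => hper i
        _ = ((∑ i, (deltaFP n u v i - ε i) / (s i * rW / rv)) + ∑ i, s i * rW / rv) / 2 := by
            rw [← Finset.sum_div, Finset.sum_add_distrib]
        _ ≤ (((n:ℝ) - 2) * rW + ((n:ℝ) - 2) * rW) / 2 := by
            rw [hT1, hθsum]
            linarith [hT1b]
        _ = ((n:ℝ) - 2) * rW := by ring
    have hGpos := aux_Gpos n hn u' hu' huniq' v' hv' w hwv'
    rw [← hrW] at hGpos
    linarith

/-- on the set `𝒰` of `u ∈ [0,1]^n` for which `v = f(u,v)` has a unique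
solution `v(u)` on `[v₀(u), +∞)`, the map `u ↦ v(u)` is Lipschitz for the ℓ₁-norm:
`|v(u) − v(u')| ≤ (8/n) Σ_i |u_i − u'_i|`. -/
theorem fixed_point_lipschitz
    (n : ℕ) (hn : 2 < n)
    (u u' : Fin n → ℝ) (hu : ∀ i, u i ∈ Set.Icc (0 : ℝ) 1)
    (hu' : ∀ i, u' i ∈ Set.Icc (0 : ℝ) 1)
    (huniq : ∃! v, v ∈ Set.Ici (v0FP n u) ∧ fFP n u v = v)
    (huniq' : ∃! v, v ∈ Set.Ici (v0FP n u') ∧ fFP n u' v = v)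
    (v v' : ℝ)
    (hv : v ∈ Set.Ici (v0FP n u) ∧ fFP n u v = v)
    (hv' : v' ∈ Set.Ici (v0FP n u') ∧ fFP n u' v' = v') :
    |v - v'| ≤ (8 / (n : ℝ)) * ∑ i, |u i - u' i| := by
  rw [abs_sub_le_iff]
  constructor
  · exact aux_one_sided n hn u u' hu hu' huniq' v v' hv hv'
  · have h := aux_one_sided n hn u' u hu' hu huniq v' v hv' hv
    have e : ∑ i, |u' i - u i| = ∑ i, |u i - u' i| :=
      Finset.sum_congr rfl fun i _ => abs_sub_comm _ _
    rw [e] at h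
    exact h
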